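/- For the Thompson metric d on P(n) and any A, B, C, D ∈ P(n), d(A+B, C+D) ≤ max{d(A,C), d(B,D)}. In particular d(A+B, A+D) ≤ d(B,D). -/

import Mathlib

open Matrix ComplexOrder

/-- W(A/B) = inf{δ > 0 : A ≤ δB} in the Loewner order on complex matrices. -/
noncomputable def W {n : ℕ} (A B : Matrix (Fin n) (Fin n) ℂ) : ℝ :=
  sInf {δ : ℝ | 0 < δ ∧ (δ • B - A).PosSemidef}

/-- The Thompson metric d(A,B) = max{log W(A/B), log W(B/A)}. -/
noncomputable def thompsonDist {n : ℕ} (A B : Matrix (Fin n) (Fin n) ℂ) : ℝ :=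
  max (Real.log (W A B)) (Real.log (W B A))

namespace ThompsonAux

variable {n : ℕ}

/-- The defining set of `W`. -/
def S (A B : Matrix (Fin n) (Fin n) ℂ) : Set ℝ :=
  {δ : ℝ | 0 < δ ∧ (δ • B - A).PosSemidef}

lemma W_eq (A B : Matrix (Fin n) (Fin n) ℂ) : W A B = sInf (S A B) := rfl

lemma S_bddBelow (A B : Matrix (Fin n) (Fin n) ℂ) : BddBelow (S A B) :=
  ⟨0, fun _ hx => le_of_lt hx.1⟩

/-- Nonnegative real scalar multiples of PSD matrices are PSD. -/
lemma smul_psd {c : ℝ} (hc : 0 ≤ c) {M : Matrix (Fin n) (Fin n) ℂ}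
    (hM : M.PosSemidef) : (c • M).PosSemidef := by
  refine ⟨?_, fun x => ?_⟩
  · rw [Matrix.IsHermitian, Matrix.conjTranspose_smul, star_trivial, hM.1]
  · exact (hM.smul hc).2 x

/-- For Hermitian `M` there is `δ > 0` with `δ • 1 - M` PSD. -/
lemma exists_smul_one_sub {M : Matrix (Fin n) (Fin n) ℂ} (hM : M.IsHermitian) :
    ∃ δ : ℝ, 0 < δ ∧ (δ • (1 : Matrix (Fin n) (Fin n) ℂ) - M).PosSemidef := by
  set δ : ℝ := 1 + ∑ i, |hM.eigenvalues i| with hδdef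
  have hδ : 0 < δ := by positivity
  refine ⟨δ, hδ, ?_⟩
  set U : Matrix (Fin n) (Fin n) ℂ := (hM.eigenvectorUnitary : Matrix (Fin n) (Fin n) ℂ) with hUdef
  have hU : U * star U = 1 := Unitary.mul_star_self_of_mem hM.eigenvectorUnitary.2
  have key : δ • (1 : Matrix (Fin n) (Fin n) ℂ) - M =
      U * Matrix.diagonal (fun i => ((δ - hM.eigenvalues i : ℝ) : ℂ)) * Uᴴ := by
    have hone : δ • (1 : Matrix (Fin n) (Fin n) ℂ) = U * (δ • 1) * star U := by
      rw [Matrix.mul_smul, Matrix.smul_mul, mul_one, hU]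
    conv_lhs => rw [hM.spectral_theorem, Unitary.conjStarAlgAut_apply, hone]
    rw [← Matrix.sub_mul, ← Matrix.mul_sub, Matrix.star_eq_conjTranspose]
    congr 1
    congr 1
    ext i j
    by_cases h : i = j
    · subst h
      simp [Matrix.one_apply, Matrix.diagonal_apply, Complex.real_smul, Complex.ofReal_sub]
    · simp [Matrix.one_apply, Matrix.diagonal_apply, h]
  rw [key]
  refine Matrix.PosSemidef.mul_mul_conjTranspose_same ?_ U
  refine Matrix.PosSemidef.diagonal fun i => ?_
  refine Complex.zero_le_real.2 ?_
  have h1 : hM.eigenvalues i ≤ |hM.eigenvalues i| := le_abs_self _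
  have h2 : |hM.eigenvalues i| ≤ ∑ j, |hM.eigenvalues j| :=
    Finset.single_le_sum (f := fun j => |hM.eigenvalues j|)
      (fun j _ => abs_nonneg _) (Finset.mem_univ i)
  simp only [hδdef]
  linarith

open scoped MatrixOrder in
/-- For Hermitian `A` and positive definite `C`, `S A C` is nonempty. -/
lemma S_nonempty {A C : Matrix (Fin n) (Fin n) ℂ} (hA : A.IsHermitian) (hC : C.PosDef) :
    (S A C).Nonempty := by
  classical
  set R := CFC.sqrt C with hRdef
  have hR : R.PosSemidef := (CFC.sqrt_nonneg C).posSemidef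
  have hRR : R * R = C := CFC.sqrt_mul_sqrt_self C hC.posSemidef.nonneg
  have hdet : IsUnit R.det := by
    rw [isUnit_iff_ne_zero]
    intro h
    have : R.det * R.det = C.det := by rw [← Matrix.det_mul, hRR]
    rw [h, zero_mul] at this
    exact (ne_of_gt hC.det_pos) this.symm
  have hinv : R * R⁻¹ = 1 := Matrix.mul_nonsing_inv _ hdet
  have hinv' : R⁻¹ * R = 1 := Matrix.nonsing_inv_mul _ hdet
  have hRinvH : R⁻¹.IsHermitian := by
    rw [Matrix.IsHermitian, Matrix.conjTranspose_nonsing_inv, hR.1]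
  set M := R⁻¹ * A * R⁻¹ with hMdef
  have hMH : M.IsHermitian := by
    rw [Matrix.IsHermitian, hMdef, Matrix.conjTranspose_mul, Matrix.conjTranspose_mul,
      hRinvH.eq, hA.eq]
    rw [mul_assoc]
  obtain ⟨δ, hδ, hpsd⟩ := exists_smul_one_sub hMH
  refine ⟨δ, hδ, ?_⟩
  have key : δ • C - A = R * (δ • (1 : Matrix (Fin n) (Fin n) ℂ) - M) * R := by
    rw [Matrix.mul_sub, Matrix.sub_mul, Matrix.mul_smul, Matrix.smul_mul, mul_one, hRR]
    congr 1
    rw [hMdef]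
    calc A = (R * R⁻¹) * A * (R⁻¹ * R) := by rw [hinv, hinv', one_mul, mul_one]
      _ = R * (R⁻¹ * A * R⁻¹) * R := by simp only [mul_assoc]
  rw [key]
  have := hpsd.mul_mul_conjTranspose_same R
  rwa [hR.1] at this

/-- A fixed nonzero vector. -/
noncomputable def x0 (hn : 0 < n) : Fin n → ℂ := Pi.single (⟨0, hn⟩ : Fin n) 1

/-- Quadratic form at the fixed nonzero vector. -/
noncomputable def q (hn : 0 < n) (M : Matrix (Fin n) (Fin n) ℂ) : ℝ :=
  RCLike.re (dotProduct (star (x0 hn)) (M *ᵥ x0 hn))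

lemma x0_ne_zero (hn : 0 < n) : x0 hn ≠ 0 := by
  intro h
  have := congrFun h ⟨0, hn⟩
  simp [x0] at this

lemma q_pos (hn : 0 < n) {M : Matrix (Fin n) (Fin n) ℂ} (hM : M.PosDef) : 0 < q hn M :=
  hM.re_dotProduct_pos (x0_ne_zero hn)

lemma q_le_of_mem (hn : 0 < n) {A C : Matrix (Fin n) (Fin n) ℂ} {δ : ℝ}
    (h : (δ • C - A).PosSemidef) : q hn A ≤ δ * q hn C := by
  have h0 := h.re_dotProduct_nonneg (x0 hn)
  have heq : RCLike.re (dotProduct (star (x0 hn)) ((δ • C - A) *ᵥ x0 hn))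
      = δ * q hn C - q hn A := by
    rw [Matrix.sub_mulVec, Matrix.smul_mulVec, dotProduct_sub,
      dotProduct_smul, map_sub, RCLike.smul_re]
    rfl
  rw [heq] at h0
  linarith

lemma le_of_mem_S (hn : 0 < n) {A C : Matrix (Fin n) (Fin n) ℂ} (hC : C.PosDef)
    {δ : ℝ} (hδ : δ ∈ S A C) : q hn A / q hn C ≤ δ := by
  rw [div_le_iff₀ (q_pos hn hC)]
  exact q_le_of_mem hn hδ.2

lemma W_pos (hn : 0 < n) {A C : Matrix (Fin n) (Fin n) ℂ} (hA : A.PosDef) (hC : C.PosDef) :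
    0 < W A C := by
  have h1 : q hn A / q hn C ≤ W A C := by
    rw [W_eq]
    exact le_csInf (S_nonempty hA.1 hC) fun δ hδ => le_of_mem_S hn hC hδ
  exact lt_of_lt_of_le (div_pos (q_pos hn hA) (q_pos hn hC)) h1

lemma W_self (hn : 0 < n) {A : Matrix (Fin n) (Fin n) ℂ} (hA : A.PosDef) : W A A = 1 := by
  rw [W_eq]
  refine le_antisymm ?_ ?_
  · refine csInf_le (S_bddBelow A A) ⟨one_pos, ?_⟩
    simp [Matrix.PosSemidef.zero]
  · refine le_csInf (S_nonempty hA.1 hA) fun δ hδ => ?_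
    have := q_le_of_mem hn hδ.2
    have hq := q_pos hn hA
    nlinarith

lemma one_le_W_mul_W (hn : 0 < n) {B D : Matrix (Fin n) (Fin n) ℂ}
    (hB : B.PosDef) (hD : D.PosDef) : 1 ≤ W B D * W D B := by
  have hw1 : 0 < W B D := W_pos hn hB hD
  have key : ∀ γ ∈ S D B, 1 / W B D ≤ γ := by
    intro γ hγ
    have hγpos := hγ.1
    have h2 : ∀ δ ∈ S B D, 1 / γ ≤ δ := by
      intro δ hδ
      have hqB := q_pos hn hB
      have hqD := q_pos hn hD
      have e1 := q_le_of_mem hn hδ.2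
      have e2 := q_le_of_mem hn hγ.2
      rw [div_le_iff₀ hγpos]
      nlinarith [hδ.1]
    have h3 : 1 / γ ≤ W B D := by
      rw [W_eq]
      exact le_csInf (S_nonempty hB.1 hD) h2
    rw [div_le_iff₀ hγpos] at h3
    rw [div_le_iff₀ hw1]
    linarith
  have h4 : 1 / W B D ≤ W D B := by
    rw [W_eq (A := D) (B := B)]
    exact le_csInf (S_nonempty hD.1 hB) key
  rw [div_le_iff₀ hw1] at h4
  linarith

lemma thompson_nonneg (hn : 0 < n) {B D : Matrix (Fin n) (Fin n) ℂ}
    (hB : B.PosDef) (hD : D.PosDef) : 0 ≤ thompsonDist B D := by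
  have h1 : 0 < W B D := W_pos hn hB hD
  have h2 : 0 < W D B := W_pos hn hD hB
  have h3 : 0 ≤ Real.log (W B D) + Real.log (W D B) := by
    rw [← Real.log_mul (ne_of_gt h1) (ne_of_gt h2)]
    exact Real.log_nonneg (one_le_W_mul_W hn hB hD)
  have h4 : Real.log (W B D) ≤ thompsonDist B D := le_max_left _ _
  have h5 : Real.log (W D B) ≤ thompsonDist B D := le_max_right _ _
  linarith

lemma mem_S_add {A B C D : Matrix (Fin n) (Fin n) ℂ} (hC : C.PosDef) (hD : D.PosDef)
    {a b : ℝ} (ha : a ∈ S A C) (hb : b ∈ S B D) : max a b ∈ S (A + B) (C + D) := by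
  refine ⟨lt_max_of_lt_left ha.1, ?_⟩
  have key : max a b • (C + D) - (A + B) =
      ((a • C - A) + (b • D - B)) + ((max a b - a) • C + (max a b - b) • D) := by
    simp only [smul_add, sub_smul]
    abel
  rw [key]
  exact ((ha.2.add hb.2).add
    ((smul_psd (sub_nonneg.2 (le_max_left a b)) hC.posSemidef).add
      (smul_psd (sub_nonneg.2 (le_max_right a b)) hD.posSemidef)))

lemma W_add_le {A B C D : Matrix (Fin n) (Fin n) ℂ}
    (hA : A.PosDef) (hB : B.PosDef) (hC : C.PosDef) (hD : D.PosDef) :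
    W (A + B) (C + D) ≤ max (W A C) (W B D) := by
  refine le_of_forall_pos_le_add fun ε hε => ?_
  obtain ⟨a, haS, ha⟩ := Real.lt_sInf_add_pos (S_nonempty hA.1 hC) hε
  obtain ⟨b, hbS, hb⟩ := Real.lt_sInf_add_pos (S_nonempty hB.1 hD) hε
  have hmem := mem_S_add hC hD haS hbS
  have h1 : W (A + B) (C + D) ≤ max a b := csInf_le (S_bddBelow _ _) hmem
  have h2 : max a b ≤ max (W A C) (W B D) + ε := by
    rw [W_eq, W_eq]
    rcases max_cases a b with ⟨h, _⟩ | ⟨h, _⟩ <;> rw [h]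
    · exact le_trans (le_of_lt ha) (add_le_add_left (le_max_left _ _) ε)
    · exact le_trans (le_of_lt hb) (add_le_add_left (le_max_right _ _) ε)
  linarith

lemma thompson_add_le {A B C D : Matrix (Fin n) (Fin n) ℂ} (hn : 0 < n)
    (hA : A.PosDef) (hB : B.PosDef) (hC : C.PosDef) (hD : D.PosDef) :
    thompsonDist (A + B) (C + D) ≤ max (thompsonDist A C) (thompsonDist B D) := by
  have key : ∀ (A B C D : Matrix (Fin n) (Fin n) ℂ), A.PosDef → B.PosDef → C.PosDef →
      D.PosDef → Real.log (W (A + B) (C + D)) ≤ max (thompsonDist A C) (thompsonDist B D) := by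
    intro A B C D hA hB hC hD
    have h1 : Real.log (W (A + B) (C + D)) ≤ Real.log (max (W A C) (W B D)) :=
      Real.log_le_log (W_pos hn (hA.add hB) (hC.add hD)) (W_add_le hA hB hC hD)
    have h2 : Real.log (max (W A C) (W B D)) = max (Real.log (W A C)) (Real.log (W B D)) := by
      rcases max_cases (W A C) (W B D) with ⟨h, hle⟩ | ⟨h, hle⟩ <;> rw [h]
      · exact (max_eq_left (Real.log_le_log (W_pos hn hB hD) hle)).symm
      · exact (max_eq_right (Real.log_le_log (W_pos hn hA hC) (le_of_lt hle))).symm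
    calc Real.log (W (A + B) (C + D)) ≤ max (Real.log (W A C)) (Real.log (W B D)) := by
          rw [← h2]; exact h1
      _ ≤ max (thompsonDist A C) (thompsonDist B D) :=
          max_le_max (le_max_left _ _) (le_max_left _ _)
  refine max_le (key A B C D hA hB hC hD) ?_
  have hsym : ∀ (X Y : Matrix (Fin n) (Fin n) ℂ), thompsonDist X Y = thompsonDist Y X := by
    intro X Y; rw [thompsonDist, thompsonDist, max_comm]
  have := key C D A B hC hD hA hB
  rw [hsym C A, hsym D B] at this
  exact this

end ThompsonAux

open ThompsonAux in
/-- Subadditivity of the Thompson metric under sums: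
d(A+B, C+D) ≤ max{d(A,C), d(B,D)}; in particular d(A+B, A+D) ≤ d(B,D). -/
theorem stmt15 {n : ℕ} (A B C D : Matrix (Fin n) (Fin n) ℂ)
    (hA : A.PosDef) (hB : B.PosDef) (hC : C.PosDef) (hD : D.PosDef) :
    thompsonDist (A + B) (C + D) ≤ max (thompsonDist A C) (thompsonDist B D) ∧
    thompsonDist (A + B) (A + D) ≤ thompsonDist B D := by
  rcases Nat.eq_zero_or_pos n with hn | hn
  · subst hn
    have hW : ∀ (X Y : Matrix (Fin 0) (Fin 0) ℂ), W X Y = 0 := by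
      intro X Y
      have hset : {δ : ℝ | 0 < δ ∧ (δ • Y - X).PosSemidef} = Set.Ioi 0 := by
        ext δ
        simp only [Set.mem_setOf_eq, Set.mem_Ioi, and_iff_left_iff_imp]
        intro _
        exact ⟨by ext i j; exact i.elim0, fun x => by simp [Subsingleton.elim x 0]⟩
      rw [W, hset, csInf_Ioi]
    have hT : ∀ (X Y : Matrix (Fin 0) (Fin 0) ℂ), thompsonDist X Y = 0 := by
      intro X Y; rw [thompsonDist, hW, hW, Real.log_zero, max_self]
    simp [hT]
  · constructor
    · exact thompson_add_le hn hA hB hC hD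
    · have h1 := thompson_add_le hn hA hB hA hD
      have h2 : thompsonDist A A = 0 := by
        rw [thompsonDist, W_self hn hA, Real.log_one, max_self]
      rw [h2, max_eq_right (thompson_nonneg hn hB hD)] at h1
      exact h1
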